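/- Let ‖·‖ be a norm on c₀₀ satisfying equation (2.2). If x ∈ c₀₀ and ‖x‖ ≠ ‖x‖_∞, then there exists an integer ℓ > 1 such that ‖x‖ = ‖x‖_ℓ. -/

import Mathlib

open Finset

/-- `c₀₀`: finitely supported functions `ℕ → ℝ`. -/
abbrev C00 := ℕ →₀ ℝ

/-- `f(t) = log₂(1+t)`. -/
noncomputable def f (t : ℝ) : ℝ := Real.logb 2 (1 + t)

/-- `E < F` for finite sets: every element of `E` is less than every element of `F`. -/
def FinsetLT (E F : Finset ℕ) : Prop := ∀ i ∈ E, ∀ j ∈ F, i < j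

/-- `Ex`: coordinatewise product of `x` with the indicator of `E`. -/
noncomputable def restr (E : Finset ℕ) (x : C00) : C00 := x.filter (· ∈ E)

/-- `N` is a norm on `c₀₀`. -/
def IsNorm (N : C00 → ℝ) : Prop :=
  (∀ x y, N (x + y) ≤ N x + N y) ∧
  (∀ (c : ℝ) (x), N (c • x) = |c| * N x) ∧
  (∀ x, x ≠ 0 → 0 < N x)

/-- the sup norm `‖x‖_∞`. -/
noncomputable def supNorm (x : C00) : ℝ := ⨆ i, |x i|

/-- `((m_i, E_i))_{i=1}^ℓ` is admissible: `2 ≤ m₁ < ⋯ < m_ℓ`, `E₁ < ⋯ < E_ℓ`,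
and `f(m_{i+1}) > ∑_{j=1}^i |E_j|`. -/
def Admissible (ℓ : ℕ) (m : Fin ℓ → ℕ) (E : Fin ℓ → Finset ℕ) : Prop :=
  (∀ i, 2 ≤ m i) ∧ StrictMono m ∧
  (∀ i j : Fin ℓ, i < j → FinsetLT (E i) (E j)) ∧
  ∀ i j : Fin ℓ, (i : ℕ) + 1 = (j : ℕ) →
    (∑ t ∈ Finset.Iic i, ((E t).card : ℝ)) < f (m j)

/-- `|||x|||_m = sup{(1/m) ∑_{i=1}^m ‖F_i x‖ : F₁ < ⋯ < F_m}`. -/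
noncomputable def tnorm (N : C00 → ℝ) (m : ℕ) (x : C00) : ℝ :=
  sSup {r | ∃ F : Fin m → Finset ℕ,
    (∀ i j : Fin m, i < j → FinsetLT (F i) (F j)) ∧
    r = (1 / (m : ℝ)) * ∑ i, N (restr (F i) x)}

/-- `‖x‖_ℓ = sup{(1/f(ℓ)) ∑_{i=1}^ℓ |||E_i x|||_{m_i} : ((m_i,E_i))_{i=1}^ℓ admissible}`. -/
noncomputable def normL (N : C00 → ℝ) (ℓ : ℕ) (x : C00) : ℝ :=
  sSup {r | ∃ (m : Fin ℓ → ℕ) (E : Fin ℓ → Finset ℕ), Admissible ℓ m E ∧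
    r = (1 / f ℓ) * ∑ i, tnorm N (m i) (restr (E i) x)}

/-- `‖x‖_{(ℓ,m₀)}`: as `‖x‖_ℓ` but restricted to admissible families with `m₁ ≥ m₀`. -/
noncomputable def normLM (N : C00 → ℝ) (ℓ m₀ : ℕ) (x : C00) : ℝ :=
  sSup {r | ∃ (m : Fin ℓ → ℕ) (E : Fin ℓ → Finset ℕ), Admissible ℓ m E ∧
    (∀ i, m₀ ≤ m i) ∧
    r = (1 / f ℓ) * ∑ i, tnorm N (m i) (restr (E i) x)}

/-- Equation (2.2):
`‖x‖ = max{‖x‖_∞, sup{(1/f(ℓ)) ∑ |||E_i x|||_{m_i} : ℓ ∈ ℕ, ((m_i,E_i)) admissible}}`. -/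
def Eq22 (N : C00 → ℝ) : Prop :=
  ∀ x, N x = max (supNorm x)
    (sSup {r | ∃ (ℓ : ℕ) (m : Fin ℓ → ℕ) (E : Fin ℓ → Finset ℕ), Admissible ℓ m E ∧
      r = (1 / f ℓ) * ∑ i, tnorm N (m i) (restr (E i) x)})

/-- A finite block basis: nonzero vectors with successive supports. -/
def BlockSeqFin {n : ℕ} (y : Fin n → C00) : Prop :=
  (∀ i, y i ≠ 0) ∧ ∀ i j : Fin n, i < j → FinsetLT (y i).support (y j).support

/-- An infinite block basis of `(e_i)`: nonzero vectors with successive supports. -/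
def BlockSeqInf (y : ℕ → C00) : Prop :=
  (∀ i, y i ≠ 0) ∧ ∀ i, FinsetLT (y i).support (y (i + 1)).support

/-- `(z_k)_{k=1}^n` is a (finite) block basis of `(y_i)`. -/
def FiniteBlockOf {n : ℕ} (z : Fin n → C00) (y : ℕ → C00) : Prop :=
  ∃ (B : Fin n → Finset ℕ) (c : ℕ → ℝ),
    (∀ k k' : Fin n, k < k' → FinsetLT (B k) (B k')) ∧
    (∀ k, z k = ∑ i ∈ B k, c i • y i) ∧ ∀ k, z k ≠ 0

/-- `x` is an `ℓ_p^k`-average with constant `C`. -/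
def IsLpAverage (N : C00 → ℝ) (p : ℝ) (k : ℕ) (C : ℝ) (x : C00) : Prop :=
  ∃ y : Fin k → C00, BlockSeqFin y ∧ (∀ i, N (y i) = 1) ∧
    (∀ a : Fin k → ℝ,
      C⁻¹ * (∑ i, |a i| ^ p) ^ (1 / p) ≤ N (∑ i, a i • y i) ∧
      N (∑ i, a i • y i) ≤ C * (∑ i, |a i| ^ p) ^ (1 / p)) ∧
    x = ((k : ℝ) ^ (-(1 / p))) • ∑ i, y i

/-- `C_p = 4(1 - 2^{-1/p})⁻¹`. -/
noncomputable def Cp (p : ℝ) : ℝ := 4 * (1 - (2 : ℝ) ^ (-(1 / p)))⁻¹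

section S8aux
open Finset

/-- The set whose sup is `tnorm`. -/
def TS (N : C00 → ℝ) (m : ℕ) (x : C00) : Set ℝ :=
  {r | ∃ F : Fin m → Finset ℕ,
    (∀ i j : Fin m, i < j → FinsetLT (F i) (F j)) ∧
    r = (1 / (m : ℝ)) * ∑ i, N (restr (F i) x)}

/-- The set whose sup is `normL`. -/
def SL (N : C00 → ℝ) (ℓ : ℕ) (x : C00) : Set ℝ :=
  {r | ∃ (m : Fin ℓ → ℕ) (E : Fin ℓ → Finset ℕ), Admissible ℓ m E ∧
    r = (1 / f ℓ) * ∑ i, tnorm N (m i) (restr (E i) x)}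

/-- The set whose sup appears in Eq. (2.2). -/
def SB (N : C00 → ℝ) (x : C00) : Set ℝ :=
  {r | ∃ (ℓ : ℕ) (m : Fin ℓ → ℕ) (E : Fin ℓ → Finset ℕ), Admissible ℓ m E ∧
      r = (1 / f ℓ) * ∑ i, tnorm N (m i) (restr (E i) x)}

lemma tnorm_eq (N : C00 → ℝ) (m : ℕ) (x : C00) : tnorm N m x = sSup (TS N m x) := rfl
lemma normL_eq (N : C00 → ℝ) (ℓ : ℕ) (x : C00) : normL N ℓ x = sSup (SL N ℓ x) := rfl
lemma eq22' {N : C00 → ℝ} (hEq : Eq22 N) (x : C00) :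
    N x = max (supNorm x) (sSup (SB N x)) := hEq x
lemma SL_subset_SB (N : C00 → ℝ) (ℓ : ℕ) (x : C00) : SL N ℓ x ⊆ SB N x :=
  fun _ ⟨m, E, h1, h2⟩ => ⟨ℓ, m, E, h1, h2⟩

lemma restr_apply (E : Finset ℕ) (x : C00) (i : ℕ) :
    restr E x i = if i ∈ E then x i else 0 := by
  simp [restr, Finsupp.filter_apply]

lemma restr_restr (E F : Finset ℕ) (x : C00) : restr E (restr F x) = restr (E ∩ F) x := by
  ext i; simp only [restr_apply, Finset.mem_inter]
  by_cases h1 : i ∈ E <;> by_cases h2 : i ∈ F <;> simp [h1, h2]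

lemma restr_eq_self {E : Finset ℕ} {x : C00} (h : x.support ⊆ E) : restr E x = x := by
  ext i; rw [restr_apply]; split_ifs with hi
  · rfl
  · by_contra h0
    exact hi (h (Finsupp.mem_support_iff.2 fun h' => h0 h'.symm))

lemma restr_empty (x : C00) : restr ∅ x = 0 := by
  ext i; simp [restr_apply]

lemma restr_zero (E : Finset ℕ) : restr E (0 : C00) = 0 := by
  ext i; simp [restr_apply]

lemma support_restr_subset (E : Finset ℕ) (x : C00) : (restr E x).support ⊆ E := by
  intro i hi
  rw [restr, Finsupp.support_filter] at hi
  exact (Finset.mem_filter.1 hi).2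

lemma restr_inter_support (E : Finset ℕ) (x : C00) :
    restr (E ∩ x.support) x = restr E x := by
  ext i; simp only [restr_apply, Finset.mem_inter]
  by_cases hE : i ∈ E <;> by_cases hs : i ∈ x.support <;>
    simp [hE, hs, Finsupp.notMem_support_iff.1]

lemma restr_eq_zero {E : Finset ℕ} {x : C00} (h : E ∩ x.support = ∅) : restr E x = 0 := by
  rw [← restr_inter_support, h, restr_empty]

lemma N_zero {N : C00 → ℝ} (hN : IsNorm N) : N 0 = 0 := by
  have := hN.2.1 0 0
  simpa using this

lemma N_nonneg {N : C00 → ℝ} (hN : IsNorm N) (x : C00) : 0 ≤ N x := by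
  rcases eq_or_ne x 0 with rfl | h
  · rw [N_zero hN]
  · exact (hN.2.2 x h).le

lemma abs_le_sum_abs (x : C00) (i : ℕ) : |x i| ≤ ∑ j ∈ x.support, |x j| := by
  by_cases h : i ∈ x.support
  · exact Finset.single_le_sum (fun j _ => abs_nonneg (x j)) h
  · rw [Finsupp.notMem_support_iff.1 h, abs_zero]
    exact Finset.sum_nonneg fun j _ => abs_nonneg (x j)

lemma bddAbove_abs (x : C00) : BddAbove (Set.range fun i => |x i|) :=
  ⟨∑ j ∈ x.support, |x j|, by rintro r ⟨i, rfl⟩; exact abs_le_sum_abs x i⟩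

lemma abs_le_supNorm (x : C00) (i : ℕ) : |x i| ≤ supNorm x :=
  le_ciSup (bddAbove_abs x) i

lemma supNorm_nonneg (x : C00) : 0 ≤ supNorm x :=
  le_trans (abs_nonneg (x 0)) (abs_le_supNorm x 0)

lemma supNorm_zero : supNorm (0 : C00) = 0 := by
  simp [supNorm]

lemma supNorm_restr_le (E : Finset ℕ) (x : C00) : supNorm (restr E x) ≤ supNorm x := by
  apply ciSup_le
  intro i
  rw [restr_apply]
  split_ifs with h
  · exact abs_le_supNorm x i
  · rw [abs_zero]; exact supNorm_nonneg x

lemma f_nonneg (ℓ : ℕ) : 0 ≤ f ℓ :=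
  Real.logb_nonneg one_lt_two (by have : (0:ℝ) ≤ ℓ := Nat.cast_nonneg ℓ; linarith)

lemma f_one : f (1 : ℕ) = 1 := by
  rw [f]; norm_num

lemma f_mono {a b : ℕ} (h : a ≤ b) : f a ≤ f b := by
  have : (a : ℝ) ≤ (b : ℝ) := Nat.cast_le.2 h
  exact Real.logb_le_logb_of_le one_lt_two (by positivity) (by linarith)

lemma one_le_f {ℓ : ℕ} (h : 1 ≤ ℓ) : 1 ≤ f ℓ := f_one ▸ f_mono h

lemma f_pos {ℓ : ℕ} (h : 1 ≤ ℓ) : 0 < f ℓ := lt_of_lt_of_le one_pos (one_le_f h)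

lemma one_div_f_nonneg (ℓ : ℕ) : 0 ≤ 1 / f ℓ :=
  div_nonneg zero_le_one (f_nonneg ℓ)

lemma one_div_f_le_one (ℓ : ℕ) : 1 / f ℓ ≤ 1 := by
  rcases Nat.eq_zero_or_pos ℓ with rfl | h
  · have : f (0 : ℕ) = 0 := by simp [f]
    rw [this]; norm_num
  · rw [div_le_one (f_pos h)]; exact one_le_f h

end S8aux
section S8aux2
open Finset

lemma zero_mem_TS {N : C00 → ℝ} (hN : IsNorm N) (m : ℕ) (x : C00) : (0:ℝ) ∈ TS N m x := by
  refine ⟨fun _ => ∅, fun i j _ a ha => absurd ha (by simp), ?_⟩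
  simp [restr_empty, N_zero hN]

lemma TS_nonempty {N : C00 → ℝ} (hN : IsNorm N) (m : ℕ) (x : C00) : (TS N m x).Nonempty :=
  ⟨0, zero_mem_TS hN m x⟩

lemma tnorm_zero {N : C00 → ℝ} (hN : IsNorm N) (m : ℕ) : tnorm N m 0 = 0 := by
  have h : TS N m 0 = {0} := by
    ext r
    constructor
    · rintro ⟨F, _, rfl⟩
      simp [restr_zero, N_zero hN]
    · rintro rfl
      exact zero_mem_TS hN m 0
  rw [tnorm_eq, h, csSup_singleton]

lemma tnorm_le {N : C00 → ℝ} (hN : IsNorm N) {m : ℕ} {y : C00} {C : ℝ}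
    (hC : 0 ≤ C) (hb : ∀ G : Finset ℕ, N (restr G y) ≤ C) (hm : 1 ≤ m) :
    tnorm N m y ≤ C := by
  rw [tnorm_eq]
  apply csSup_le (TS_nonempty hN m y)
  rintro r ⟨F, _, rfl⟩
  have h1 : ∑ i : Fin m, N (restr (F i) y) ≤ ∑ _i : Fin m, C :=
    Finset.sum_le_sum fun i _ => hb (F i)
  have h2 : ∑ _i : Fin m, C = (m : ℝ) * C := by
    rw [Finset.sum_const, Finset.card_univ, Fintype.card_fin, nsmul_eq_mul]
  have hm0 : (m : ℝ) ≠ 0 := Nat.cast_ne_zero.2 (by omega)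
  calc 1 / (m : ℝ) * ∑ i : Fin m, N (restr (F i) y) ≤ 1 / (m : ℝ) * ((m : ℝ) * C) := by
        apply mul_le_mul_of_nonneg_left _ (by positivity)
        rw [← h2]; exact h1
    _ = C := by field_simp

lemma zero_mem_SL {N : C00 → ℝ} (hN : IsNorm N) (ℓ : ℕ) (x : C00) : (0:ℝ) ∈ SL N ℓ x := by
  refine ⟨fun i => (i : ℕ) + 2, fun _ => ∅, ⟨fun i => le_add_self, ?_, ?_, ?_⟩, ?_⟩
  · intro a b hab
    have : (a : ℕ) < (b : ℕ) := hab
    show (a : ℕ) + 2 < (b : ℕ) + 2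
    omega
  · intro i j _ a ha
    exact absurd ha (by simp)
  · intro i j _
    have : (0:ℝ) < f ((j : ℕ) + 2) := by
      apply Real.logb_pos one_lt_two
      have : (0:ℝ) ≤ ((j:ℕ):ℝ) := Nat.cast_nonneg _
      push_cast
      linarith
    simpa using this
  · simp [restr_empty, tnorm_zero hN]

lemma SL_nonempty {N : C00 → ℝ} (hN : IsNorm N) (ℓ : ℕ) (x : C00) : (SL N ℓ x).Nonempty :=
  ⟨0, zero_mem_SL hN ℓ x⟩

lemma zero_mem_SB {N : C00 → ℝ} (hN : IsNorm N) (x : C00) : (0:ℝ) ∈ SB N x :=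
  SL_subset_SB N 2 x (zero_mem_SL hN 2 x)

/-- Sum of the `tnorm`s over an admissible family is at most `|supp x| * C`. -/
lemma sum_tnorm_le {N : C00 → ℝ} (hN : IsNorm N) {x : C00} {ℓ : ℕ}
    {m : Fin ℓ → ℕ} {E : Fin ℓ → Finset ℕ} (hAdm : Admissible ℓ m E)
    {C : ℝ} (hC : 0 ≤ C) (hb : ∀ G : Finset ℕ, N (restr G x) ≤ C) :
    ∑ i, tnorm N (m i) (restr (E i) x) ≤ (x.support.card : ℝ) * C := by
  classical
  set A := Finset.univ.filter (fun i : Fin ℓ => ((E i) ∩ x.support).Nonempty) with hA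
  have h1 : ∀ i ∈ (Finset.univ : Finset (Fin ℓ)), i ∉ A →
      tnorm N (m i) (restr (E i) x) = 0 := by
    intro i _ hi
    have hem : (E i) ∩ x.support = ∅ := by
      rw [hA] at hi
      simp only [Finset.mem_filter, Finset.mem_univ, true_and] at hi
      exact Finset.not_nonempty_iff_eq_empty.1 hi
    rw [restr_eq_zero hem, tnorm_zero hN]
  have h2 : ∑ i, tnorm N (m i) (restr (E i) x) = ∑ i ∈ A, tnorm N (m i) (restr (E i) x) :=
    (Finset.sum_subset (Finset.subset_univ A) h1).symm
  have h3 : ∀ i ∈ A, tnorm N (m i) (restr (E i) x) ≤ C := by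
    intro i _
    refine tnorm_le hN hC (fun G => ?_) (le_trans one_le_two (hAdm.1 i))
    rw [restr_restr]
    exact hb _
  have h4 : ∑ i ∈ A, tnorm N (m i) (restr (E i) x) ≤ (A.card : ℝ) * C := by
    calc ∑ i ∈ A, tnorm N (m i) (restr (E i) x) ≤ A.card • C := Finset.sum_le_card_nsmul A _ C h3
      _ = (A.card : ℝ) * C := nsmul_eq_mul _ _
  have h5 : A.card ≤ x.support.card := by
    have hwit : ∀ i ∈ A, ((E i) ∩ x.support).Nonempty := by
      intro i hi
      rw [hA] at hi
      simpa using hi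
    apply Finset.card_le_card_of_injOn
      (fun i => if h : ((E i) ∩ x.support).Nonempty then ((E i) ∩ x.support).min' h else 0)
    · intro i hi
      beta_reduce
      rw [dif_pos (hwit i hi)]
      exact Finset.mem_of_mem_inter_right (Finset.min'_mem _ (hwit i hi))
    · intro i hi j hj hij
      by_contra hne
      have hi' : i ∈ A := Finset.mem_coe.1 hi
      have hj' : j ∈ A := Finset.mem_coe.1 hj
      have hij : ((E i) ∩ x.support).min' (hwit i hi') = ((E j) ∩ x.support).min' (hwit j hj') := by
        simpa only [dif_pos (hwit i hi'), dif_pos (hwit j hj')] using hij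
      rcases lt_or_gt_of_ne hne with h | h
      · exact absurd hij (ne_of_lt (hAdm.2.2.1 i j h _
          (Finset.mem_of_mem_inter_left (Finset.min'_mem _ (hwit i hi'))) _
          (Finset.mem_of_mem_inter_left (Finset.min'_mem _ (hwit j hj')))))
      · exact absurd hij.symm (ne_of_lt (hAdm.2.2.1 j i h _
          (Finset.mem_of_mem_inter_left (Finset.min'_mem _ (hwit j hj'))) _
          (Finset.mem_of_mem_inter_left (Finset.min'_mem _ (hwit i hi')))))
  calc ∑ i, tnorm N (m i) (restr (E i) x) ≤ (A.card : ℝ) * C := h2 ▸ h4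
    _ ≤ (x.support.card : ℝ) * C := by
        apply mul_le_mul_of_nonneg_right _ hC
        exact_mod_cast h5

/-- A crude uniform bound on the restriction norms. -/
noncomputable def crude (N : C00 → ℝ) (x : C00) : ℝ :=
  ∑ H ∈ x.support.powerset, N (restr H x)

lemma crude_nonneg {N : C00 → ℝ} (hN : IsNorm N) (x : C00) : 0 ≤ crude N x :=
  Finset.sum_nonneg fun H _ => N_nonneg hN _

lemma le_crude {N : C00 → ℝ} (hN : IsNorm N) (x : C00) (G : Finset ℕ) :
    N (restr G x) ≤ crude N x := by
  rw [← restr_inter_support]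
  exact Finset.single_le_sum (fun H _ => N_nonneg hN (restr H x))
    (Finset.mem_powerset.2 (Finset.inter_subset_right))

lemma SB_bddAbove {N : C00 → ℝ} (hN : IsNorm N) (x : C00) : BddAbove (SB N x) := by
  refine ⟨(x.support.card : ℝ) * crude N x, ?_⟩
  rintro r ⟨ℓ, m, E, hAdm, rfl⟩
  have h1 := sum_tnorm_le hN hAdm (crude_nonneg hN x) (le_crude hN x)
  have h2 : 0 ≤ (x.support.card : ℝ) * crude N x := by
    have := crude_nonneg hN x; positivity
  calc 1 / f ℓ * ∑ i, tnorm N (m i) (restr (E i) x)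
      ≤ 1 / f ℓ * ((x.support.card : ℝ) * crude N x) :=
        mul_le_mul_of_nonneg_left h1 (one_div_f_nonneg ℓ)
    _ ≤ 1 * ((x.support.card : ℝ) * crude N x) :=
        mul_le_mul_of_nonneg_right (one_div_f_le_one ℓ) h2
    _ = (x.support.card : ℝ) * crude N x := one_mul _

lemma SL_bddAbove {N : C00 → ℝ} (hN : IsNorm N) (ℓ : ℕ) (x : C00) : BddAbove (SL N ℓ x) :=
  (SB_bddAbove hN x).mono (SL_subset_SB N ℓ x)

lemma SL_restr_subset (N : C00 → ℝ) (ℓ : ℕ) (G : Finset ℕ) (x : C00) :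
    SL N ℓ (restr G x) ⊆ SL N ℓ x := by
  rintro r ⟨m, E, hAdm, rfl⟩
  refine ⟨m, fun i => E i ∩ G, ⟨hAdm.1, hAdm.2.1, ?_, ?_⟩, ?_⟩
  · intro i j hij a ha b hb
    exact hAdm.2.2.1 i j hij a (Finset.mem_of_mem_inter_left ha) b
      (Finset.mem_of_mem_inter_left hb)
  · intro i j hij
    refine lt_of_le_of_lt (Finset.sum_le_sum fun t _ => ?_) (hAdm.2.2.2 i j hij)
    exact_mod_cast Finset.card_le_card (Finset.inter_subset_left)
  · congr 1
    apply Finset.sum_congr rfl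
    intro i _
    rw [restr_restr]

lemma SB_restr_subset (N : C00 → ℝ) (G : Finset ℕ) (x : C00) :
    SB N (restr G x) ⊆ SB N x := by
  rintro r ⟨ℓ, m, E, hAdm, rfl⟩
  exact SL_subset_SB N ℓ x (SL_restr_subset N ℓ G x ⟨m, E, hAdm, rfl⟩)

/-- Key monotonicity: restrictions do not increase the norm. -/
lemma restr_le_N {N : C00 → ℝ} (hN : IsNorm N) (hEq : Eq22 N) (x : C00) (G : Finset ℕ) :
    N (restr G x) ≤ N x := by
  rw [eq22' hEq (restr G x), eq22' hEq x]
  apply max_le_max (supNorm_restr_le G x)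
  exact csSup_le_csSup (SB_bddAbove hN x) ⟨0, zero_mem_SB hN (restr G x)⟩
    (SB_restr_subset N G x)

end S8aux2
section S8main
open Finset

lemma normL_zero_le {N : C00 → ℝ} (hN : IsNorm N) (x : C00) : normL N 0 x ≤ 0 := by
  rw [normL_eq]
  apply csSup_le (SL_nonempty hN 0 x)
  rintro r ⟨m, E, _, rfl⟩
  simp

/-- The heart of the matter: `‖x‖₁ ≤ (‖x‖ + M₂)/2` where `M₂` is the largest norm of a
proper restriction of `x`. -/
lemma T1_le {N : C00 → ℝ} (hN : IsNorm N) (hEq : Eq22 N) {x : C00}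
    (hxs : x.support.Nonempty) {M2 : ℝ} (hM2nn : 0 ≤ M2) (hM2le : M2 ≤ N x)
    (hM2 : ∀ H : Finset ℕ, H ⊆ x.support → H ≠ x.support → N (restr H x) ≤ M2) :
    normL N 1 x ≤ (N x + M2) / 2 := by
  classical
  rw [normL_eq]
  apply csSup_le (SL_nonempty hN 1 x)
  rintro r ⟨m, E, hAdm, rfl⟩
  have hf1 : f ((1:ℕ) : ℝ) = 1 := f_one
  rw [Fin.sum_univ_one, hf1]
  rw [one_div_one, one_mul]
  -- now bound `tnorm N (m 0) (restr (E 0) x)`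
  have hm2 : 2 ≤ m 0 := hAdm.1 0
  rw [tnorm_eq]
  apply csSup_le (TS_nonempty hN _ _)
  rintro t ⟨F, hF, rfl⟩
  have hm0pos : (0:ℝ) < ((m 0) : ℝ) := by
    have : 0 < (m 0) := by omega
    exact_mod_cast this
  set g := fun i : Fin (m 0) => N (restr (F i) (restr (E 0) x)) with hg
  have hterm : ∀ i, restr (F i) (restr (E 0) x) = restr (F i ∩ E 0) x := fun i =>
    restr_restr _ _ _
  set A := Finset.univ.filter (fun i : Fin (m 0) => x.support ⊆ F i ∩ E 0) with hA
  have hcardA : A.card ≤ 1 := by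
    apply Finset.card_le_one.2
    intro i hi j hj
    by_contra hne
    obtain ⟨a, ha⟩ := hxs
    have hiA : x.support ⊆ F i ∩ E 0 := by
      rw [hA] at hi; simpa using hi
    have hjA : x.support ⊆ F j ∩ E 0 := by
      rw [hA] at hj; simpa using hj
    have hai : a ∈ F i := Finset.mem_of_mem_inter_left (hiA ha)
    have haj : a ∈ F j := Finset.mem_of_mem_inter_left (hjA ha)
    rcases lt_or_gt_of_ne hne with h | h
    · exact lt_irrefl a (hF i j h a hai a haj)
    · exact lt_irrefl a (hF j i h a haj a hai)
  have hAbound : ∀ i ∈ A, g i ≤ N x := fun i _ => by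
    rw [hg]; simp only []; rw [hterm]
    exact restr_le_N hN hEq x _
  have hNAbound : ∀ i ∈ Finset.univ.filter (fun i : Fin (m 0) => ¬ x.support ⊆ F i ∩ E 0),
      g i ≤ M2 := by
    intro i hi
    simp only [Finset.mem_filter, Finset.mem_univ, true_and] at hi
    rw [hg]; simp only []; rw [hterm, ← restr_inter_support]
    apply hM2
    · exact Finset.inter_subset_right
    · intro hcontra
      apply hi
      intro a ha
      have : a ∈ F i ∩ E 0 ∩ x.support := by rw [hcontra]; exact ha
      exact Finset.mem_of_mem_inter_left this
  have hsplit : ∑ i ∈ A, g i + ∑ i ∈ Finset.univ.filter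
      (fun i : Fin (m 0) => ¬ x.support ⊆ F i ∩ E 0), g i = ∑ i, g i :=
    Finset.sum_filter_add_sum_filter_not Finset.univ _ g
  have hcards : A.card + (Finset.univ.filter
      (fun i : Fin (m 0) => ¬ x.support ⊆ F i ∩ E 0)).card = (m 0) := by
    rw [hA]
    rw [Finset.card_filter_add_card_filter_not]
    simp
  have h1 : ∑ i ∈ A, g i ≤ (A.card : ℝ) * N x := by
    calc ∑ i ∈ A, g i ≤ A.card • N x := Finset.sum_le_card_nsmul A g (N x) hAbound
      _ = (A.card : ℝ) * N x := nsmul_eq_mul _ _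
  have h2 : ∑ i ∈ Finset.univ.filter (fun i : Fin (m 0) => ¬ x.support ⊆ F i ∩ E 0), g i ≤
      ((Finset.univ.filter (fun i : Fin (m 0) => ¬ x.support ⊆ F i ∩ E 0)).card : ℝ) * M2 := by
    calc _ ≤ (Finset.univ.filter (fun i : Fin (m 0) => ¬ x.support ⊆ F i ∩ E 0)).card • M2 :=
          Finset.sum_le_card_nsmul _ g M2 hNAbound
      _ = _ := nsmul_eq_mul _ _
  -- arithmetic
  set a := A.card with ha
  set c := (Finset.univ.filter (fun i : Fin (m 0) => ¬ x.support ⊆ F i ∩ E 0)).card with hc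
  have hsum : ∑ i, g i ≤ (a : ℝ) * N x + (c : ℝ) * M2 := by
    rw [← hsplit]; exact add_le_add h1 h2
  have hcast : (a : ℝ) + (c : ℝ) = ((m 0) : ℝ) := by exact_mod_cast hcards
  have hNxnn : 0 ≤ N x := N_nonneg hN x
  have hm0two : (2:ℝ) ≤ ((m 0) : ℝ) := by exact_mod_cast hm2
  have hstep : 1 / ((m 0):ℝ) * ∑ i, g i ≤ 1 / ((m 0):ℝ) * ((a : ℝ) * N x + (c : ℝ) * M2) :=
    mul_le_mul_of_nonneg_left hsum (by positivity)
  refine le_trans hstep ?_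
  rw [div_mul_eq_mul_div, one_mul, div_le_div_iff₀ hm0pos two_pos]
  -- goal : (a * N x + c * M2) * 2 ≤ (N x + M2) * (m 0)
  interval_cases a
  · -- a = 0
    have : (c : ℝ) = ((m 0) : ℝ) := by rw [← hcast]; push_cast; ring
    rw [this]
    nlinarith
  · -- a = 1
    have : (c : ℝ) = ((m 0) : ℝ) - 1 := by rw [← hcast]; push_cast; ring
    rw [this]
    nlinarith

end S8main
/-- Remark 2.4: if `‖x‖ ≠ ‖x‖_∞` then `‖x‖ = ‖x‖_ℓ` for some `ℓ > 1`. -/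
theorem statement8 (N : C00 → ℝ) (hN : IsNorm N) (hEq : Eq22 N)
    (x : C00) (hx : N x ≠ supNorm x) :
    ∃ ℓ : ℕ, 1 < ℓ ∧ N x = normL N ℓ x := by
  classical
  suffices H : ∀ n : ℕ, ∀ x : C00, x.support.card ≤ n → N x ≠ supNorm x →
      ∃ ℓ : ℕ, 1 < ℓ ∧ N x = normL N ℓ x from H _ x le_rfl hx
  intro n
  induction n with
  | zero =>
    intro x hc hx
    have hx0 : x = 0 := Finsupp.support_eq_empty.1 (Finset.card_eq_zero.1 (Nat.le_zero.1 hc))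
    subst hx0
    exact absurd (by rw [N_zero hN, supNorm_zero]) hx
  | succ n ih =>
    intro x hc hx
    have hx0 : x ≠ 0 := by
      rintro rfl
      exact hx (by rw [N_zero hN, supNorm_zero])
    have hNpos : 0 < N x := hN.2.2 x hx0
    have hEqx := eq22' hEq x
    have hlt : supNorm x < sSup (SB N x) := by
      by_contra hcon
      push_neg at hcon
      rw [max_eq_left hcon] at hEqx
      exact hx hEqx
    have hNx : N x = sSup (SB N x) := by rw [hEqx, max_eq_right hlt.le]
    have hsuplt : supNorm x < N x := hNx ▸ hlt
    -- uniform tail bound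
    set s := (x.support.card : ℝ) with hs
    have hb : ∀ G : Finset ℕ, N (restr G x) ≤ N x := restr_le_N hN hEq x
    have hsle : ∀ ℓ : ℕ, ∀ r ∈ SL N ℓ x, r ≤ 1 / f ℓ * (s * N x) := by
      rintro ℓ r ⟨m, E, hAdm, rfl⟩
      exact mul_le_mul_of_nonneg_left (sum_tnorm_le hN hAdm hNpos.le hb) (one_div_f_nonneg ℓ)
    set R : ℝ := max 1 s with hR
    set L : ℕ := ⌈(2:ℝ) ^ R⌉₊ + 2 with hL
    have hfL : R < f L := by
      have h2R : (2:ℝ) ^ R ≤ (⌈(2:ℝ) ^ R⌉₊ : ℝ) := Nat.le_ceil _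
      have hgt : (2:ℝ) ^ R < 1 + (L : ℝ) := by
        rw [hL]; push_cast; linarith
      have := Real.logb_lt_logb (b := 2) one_lt_two (by positivity) hgt
      rwa [Real.logb_rpow (by norm_num) (by norm_num)] at this
    have hfLpos : 0 < f L := lt_of_lt_of_le one_pos (le_trans (le_max_left 1 s) hfL.le)
    have htail : ∀ ℓ : ℕ, L ≤ ℓ → ∀ r ∈ SL N ℓ x, r ≤ 1 / f L * (s * N x) := by
      intro ℓ hℓ r hr
      refine le_trans (hsle ℓ r hr) ?_
      apply mul_le_mul_of_nonneg_right _ (mul_nonneg (Nat.cast_nonneg _) hNpos.le)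
      apply div_le_div_of_nonneg_left zero_le_one hfLpos (f_mono hℓ)
    have hbound : 1 / f L * (s * N x) < N x := by
      rw [div_mul_eq_mul_div, one_mul, div_lt_iff₀ hfLpos]
      have hsR : s ≤ R := le_max_right 1 s
      nlinarith
    by_cases hA : ∃ ℓ : ℕ, 2 ≤ ℓ ∧ N x = normL N ℓ x
    · obtain ⟨ℓ, h2, hval⟩ := hA
      exact ⟨ℓ, h2, hval⟩
    push_neg at hA
    have hTle : ∀ ℓ : ℕ, normL N ℓ x ≤ N x := by
      intro ℓ
      rw [hNx, normL_eq]
      exact csSup_le_csSup (SB_bddAbove hN x) (SL_nonempty hN ℓ x) (SL_subset_SB N ℓ x)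
    have hT1 : normL N 1 x = N x := by
      by_contra hne
      have hT1lt : normL N 1 x < N x := (hTle 1).lt_of_ne hne
      set Dset := insert 0 (Finset.Ico 2 L) with hDset
      have hDne : Dset.Nonempty := ⟨0, Finset.mem_insert_self _ _⟩
      set D := Dset.sup' hDne (fun ℓ => normL N ℓ x) with hD
      have hDlt : D < N x := by
        rw [hD]
        apply (Finset.sup'_lt_iff hDne).2
        intro ℓ hℓ
        rcases Finset.mem_insert.1 hℓ with rfl | hℓ
        · exact lt_of_le_of_lt (normL_zero_le hN x) hNpos
        · exact (hTle ℓ).lt_of_ne fun h => hA ℓ (Finset.mem_Ico.1 hℓ).1 h.symm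
      set U := max D (max (1 / f L * (s * N x)) (normL N 1 x)) with hU
      have hUlt : U < N x := by
        rw [hU]
        exact max_lt hDlt (max_lt hbound hT1lt)
      have hle : sSup (SB N x) ≤ U := by
        apply csSup_le ⟨0, zero_mem_SB hN x⟩
        rintro r ⟨ℓ, m, E, hAdm, rfl⟩
        set r := 1 / f ℓ * ∑ i, tnorm N (m i) (restr (E i) x) with hr
        have hrSL : r ∈ SL N ℓ x := ⟨m, E, hAdm, rfl⟩
        have hrT : r ≤ normL N ℓ x := le_csSup (SL_bddAbove hN ℓ x) hrSL
        by_cases h1 : L ≤ ℓ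
        · exact le_trans (htail ℓ h1 r hrSL) (le_trans (le_max_left _ _) (le_max_right D _))
        · push_neg at h1
          rcases eq_or_ne ℓ 1 with rfl | hℓ1
          · exact le_trans hrT (le_trans (le_max_right _ _) (le_max_right D _))
          · have hmem : ℓ ∈ Dset := by
              rcases Nat.eq_zero_or_pos ℓ with rfl | hpos
              · exact Finset.mem_insert_self _ _
              · refine Finset.mem_insert_of_mem (Finset.mem_Ico.2 ⟨?_, h1⟩)
                omega
            exact le_trans hrT (le_trans (Finset.le_sup' (fun ℓ => normL N ℓ x) hmem)
              (le_max_left D _))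
      rw [← hNx] at hle
      exact absurd (lt_of_le_of_lt hle hUlt) (lt_irrefl _)
    -- M2 argument
    have hsne : x.support.Nonempty := Finsupp.support_nonempty_iff.2 hx0
    set P := x.support.powerset.erase x.support with hP
    have hPne : P.Nonempty := by
      refine ⟨∅, Finset.mem_erase.2 ⟨?_, Finset.empty_mem_powerset _⟩⟩
      exact fun h => (Finset.nonempty_iff_ne_empty.1 hsne) h.symm
    set M2 := P.sup' hPne (fun H => N (restr H x)) with hM2
    have hM2le : M2 ≤ N x := Finset.sup'_le hPne _ fun H _ => hb H
    have hM2nn : 0 ≤ M2 := by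
      refine le_trans ?_ (Finset.le_sup' (fun H => N (restr H x)) (Finset.mem_erase.2
        ⟨fun h => (Finset.nonempty_iff_ne_empty.1 hsne) h.symm, Finset.empty_mem_powerset _⟩))
      rw [restr_empty, N_zero hN]
    have hM2p : ∀ H : Finset ℕ, H ⊆ x.support → H ≠ x.support → N (restr H x) ≤ M2 := by
      intro H h1 h2
      exact Finset.le_sup' (fun H => N (restr H x))
        (Finset.mem_erase.2 ⟨h2, Finset.mem_powerset.2 h1⟩)
    have hkey := T1_le hN hEq hsne hM2nn hM2le hM2p
    rw [hT1] at hkey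
    have hM2eq : M2 = N x := le_antisymm hM2le (by linarith)
    obtain ⟨H, hHP, hHval⟩ := Finset.exists_mem_eq_sup' hPne (fun H => N (restr H x))
    have hHsub : H ⊆ x.support := Finset.mem_powerset.1 (Finset.mem_erase.1 hHP).2
    have hHne : H ≠ x.support := (Finset.mem_erase.1 hHP).1
    set y := restr H x with hy
    have hNy : N y = N x := by rw [← hM2eq, hM2, hHval]
    have hsuppy : y.support.card ≤ n := by
      have h1 : y.support ⊆ H := support_restr_subset H x
      have h2 : H.card < x.support.card :=
        Finset.card_lt_card (Finset.ssubset_iff_subset_ne.2 ⟨hHsub, hHne⟩)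
      have h3 := Finset.card_le_card h1
      omega
    have hyne : N y ≠ supNorm y := by
      have h1 : supNorm y ≤ supNorm x := supNorm_restr_le H x
      rw [hNy]
      exact fun h => absurd (h ▸ lt_of_le_of_lt h1 hsuplt) (lt_irrefl _)
    obtain ⟨ℓ, hℓ, hval⟩ := ih y hsuppy hyne
    refine ⟨ℓ, hℓ, le_antisymm ?_ (hTle ℓ)⟩
    calc N x = N y := hNy.symm
      _ = normL N ℓ y := hval
      _ ≤ normL N ℓ x := by
          rw [normL_eq, normL_eq]
          exact csSup_le_csSup (SL_bddAbove hN ℓ x) (SL_nonempty hN ℓ y)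
            (SL_restr_subset N ℓ H x)
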